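/- Let k ≥ 0 and let n, m be nonnegative integers. Then n = ∂^k(n+m) if and only if ∂_k(n) + δ_k(n+m) = m. -/

import Mathlib

/-- Fold a function `g` over the terms `(a_t, t)` of the unique Macaulay-type
representation `n = C(a_{k+1}, k+1) + ⋯ + C(a_i, i)` with
`a_{k+1} > ⋯ > a_i ≥ i ≥ 1`, computed greedily: at each level `t` (from `k+1`
down), `a_t` is the largest `a` with `C(a, t) ≤` the current remainder. -/
def macRepFold (g : ℕ → ℕ → ℕ) : ℕ → ℕ → ℕ
  | 0, _ => 0
  | t + 1, n =>
    if n = 0 then 0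
    else
      let a := Nat.findGreatest (fun a => Nat.choose a (t + 1) ≤ n) (n + t + 1)
      g a (t + 1) + macRepFold g t (n - Nat.choose a (t + 1))

/-- The combinatorial shadow function `∂_k(n) = Σ_t C(a_t, t - 1)`. -/
def partialLower (k n : ℕ) : ℕ := macRepFold (fun a t => Nat.choose a (t - 1)) (k + 1) n

/-- The combinatorial shadow function `∂^k(n) = Σ_t C(a_t - 1, t)`. -/
def partialUpper (k n : ℕ) : ℕ := macRepFold (fun a t => Nat.choose (a - 1) t) (k + 1) n

/-- The error function `δ_k(n) = #{t : a_t = t}`. -/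
def deltaErr (k n : ℕ) : ℕ := macRepFold (fun a t => if a = t then 1 else 0) (k + 1) n

/-- The function `d^k(n) = Σ_t C(a_t + 1, t)`. -/
def dUpper (k n : ℕ) : ℕ := macRepFold (fun a t => Nat.choose (a + 1) t) (k + 1) n

lemma macRepFold_zero (g : ℕ → ℕ → ℕ) (T : ℕ) : macRepFold g T 0 = 0 := by
  cases T <;> simp [macRepFold]

lemma choose_lb : ∀ T c : ℕ, 1 ≤ T → T ≤ c → c + 1 ≤ Nat.choose c T + T := by
  intro T
  induction T with
  | zero => omega
  | succ T ih =>
    intro c h1 h2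
    rcases Nat.eq_or_lt_of_le h2 with h | h
    · rw [← h, Nat.choose_self]; omega
    rcases T with _ | T'
    · rw [Nat.choose_one_right]
    obtain ⟨c', rfl⟩ : ∃ c', c = c' + 1 := ⟨c - 1, by omega⟩
    have hih := ih c' (by omega) (by omega)
    have pas : Nat.choose (c' + 1) (T' + 1 + 1) =
        Nat.choose c' (T' + 1) + Nat.choose c' (T' + 1 + 1) :=
      Nat.choose_succ_succ c' (T' + 1)
    omega

lemma greedy_eq (t n a : ℕ) (ha : t + 1 ≤ a) (h1 : Nat.choose a (t+1) ≤ n)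
    (h2 : n < Nat.choose (a+1) (t+1)) :
    Nat.findGreatest (fun x => Nat.choose x (t + 1) ≤ n) (n + t + 1) = a := by
  have hb : a ≤ n + t + 1 := by
    have := choose_lb (t+1) a (by omega) ha
    omega
  apply le_antisymm
  · by_contra hlt
    push_neg at hlt
    have hfg := Nat.findGreatest_spec (P := fun x => Nat.choose x (t + 1) ≤ n) hb h1
    have : Nat.choose (a+1) (t+1) ≤ Nat.choose (Nat.findGreatest (fun x => Nat.choose x (t + 1) ≤ n) (n + t + 1)) (t+1) :=
      Nat.choose_le_choose _ (by omega)
    omega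
  · exact Nat.le_findGreatest hb h1

lemma greedy_spec (t n : ℕ) (hn : n ≠ 0) :
    t + 1 ≤ Nat.findGreatest (fun a => Nat.choose a (t + 1) ≤ n) (n + t + 1) ∧
    Nat.choose (Nat.findGreatest (fun a => Nat.choose a (t + 1) ≤ n) (n + t + 1)) (t+1) ≤ n ∧
    n < Nat.choose (Nat.findGreatest (fun a => Nat.choose a (t + 1) ≤ n) (n + t + 1) + 1) (t+1) := by
  set a := Nat.findGreatest (fun a => Nat.choose a (t + 1) ≤ n) (n + t + 1) with hadef
  have hP : Nat.choose (t+1) (t+1) ≤ n := by simp [Nat.choose_self]; omega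
  have h1 : t + 1 ≤ a := Nat.le_findGreatest (by omega) hP
  have h2 : Nat.choose a (t+1) ≤ n := Nat.findGreatest_spec (P := fun a => Nat.choose a (t + 1) ≤ n) (by omega) hP
  refine ⟨h1, h2, ?_⟩
  rcases le_or_gt (a + 1) (n + t + 1) with hle | hgt
  · have := Nat.findGreatest_is_greatest (P := fun a => Nat.choose a (t + 1) ≤ n) (n := n + t + 1) (by omega) hle
    omega
  · have hbound : a ≤ n + t + 1 := Nat.findGreatest_le _
    have haeq : a = n + t + 1 := by omega
    have := choose_lb (t+1) (a+1) (by omega) (by omega)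
    omega

lemma macRepFold_step (g : ℕ → ℕ → ℕ) (t n a : ℕ) (ha : t + 1 ≤ a)
    (h1 : Nat.choose a (t+1) ≤ n) (h2 : n < Nat.choose (a+1) (t+1)) :
    macRepFold g (t+1) n = g a (t+1) + macRepFold g t (n - Nat.choose a (t+1)) := by
  have hn : n ≠ 0 := by
    have := Nat.choose_pos ha
    omega
  rw [macRepFold, if_neg hn]
  simp only [greedy_eq t n a ha h1 h2]

/-- Upper shadow fold. -/
def Uf (T N : ℕ) : ℕ := macRepFold (fun a t => Nat.choose (a - 1) t) T N
/-- Lower shadow fold. -/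
def Lf (T N : ℕ) : ℕ := macRepFold (fun a t => Nat.choose a (t - 1)) T N
/-- Error fold. -/
def Df (T N : ℕ) : ℕ := macRepFold (fun a t => if a = t then 1 else 0) T N

lemma Uf_zero (T : ℕ) : Uf T 0 = 0 := macRepFold_zero _ T
lemma Lf_zero (T : ℕ) : Lf T 0 = 0 := macRepFold_zero _ T
lemma Df_zero (T : ℕ) : Df T 0 = 0 := macRepFold_zero _ T

lemma Uf_step (t n a : ℕ) (ha : t + 1 ≤ a) (h1 : Nat.choose a (t+1) ≤ n)
    (h2 : n < Nat.choose (a+1) (t+1)) :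
    Uf (t+1) n = Nat.choose (a-1) (t+1) + Uf t (n - Nat.choose a (t+1)) :=
  macRepFold_step _ t n a ha h1 h2

lemma Lf_step (t n a : ℕ) (ha : t + 1 ≤ a) (h1 : Nat.choose a (t+1) ≤ n)
    (h2 : n < Nat.choose (a+1) (t+1)) :
    Lf (t+1) n = Nat.choose a t + Lf t (n - Nat.choose a (t+1)) := by
  have := macRepFold_step (fun a t => Nat.choose a (t - 1)) t n a ha h1 h2
  simpa [Lf] using this

lemma Df_step (t n a : ℕ) (ha : t + 1 ≤ a) (h1 : Nat.choose a (t+1) ≤ n)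
    (h2 : n < Nat.choose (a+1) (t+1)) :
    Df (t+1) n = (if a = t + 1 then 1 else 0) + Df t (n - Nat.choose a (t+1)) :=
  macRepFold_step _ t n a ha h1 h2

/-- Trailing-ones lemma: if `r ≤ T` the representation is all `C(t,t)`. -/
lemma Z_lemma : ∀ T r : ℕ, r ≤ T → Uf T r = 0 ∧ Df T r = r := by
  intro T
  induction T with
  | zero => intro r hr; interval_cases r; simp [Uf_zero, Df_zero]
  | succ T ih =>
    intro r hr
    rcases Nat.eq_zero_or_pos r with rfl | hpos
    · simp [Uf_zero, Df_zero]
    have h1 : Nat.choose (T+1) (T+1) ≤ r := by simp [Nat.choose_self]; omega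
    have h2 : r < Nat.choose (T+1+1) (T+1) := by
      rw [Nat.choose_succ_self_right]
      omega
    have hU := Uf_step T r (T+1) le_rfl h1 h2
    have hD := Df_step T r (T+1) le_rfl h1 h2
    have hrec := ih (r - Nat.choose (T+1) (T+1)) (by simp [Nat.choose_self]; omega)
    rw [Nat.choose_self] at hU hD hrec
    constructor
    · rw [hU, hrec.1, Nat.choose_eq_zero_of_lt (by omega)]
    · rw [hD, hrec.2, if_pos rfl]
      omega

/-- The growth bound for `n + ∂(n)`. -/
lemma M_lemma : ∀ T s c : ℕ, s < Nat.choose c T → s + Lf T s < Nat.choose (c+1) T := by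
  intro T
  induction T with
  | zero =>
    intro s c hs
    rw [Nat.choose_zero_right] at hs ⊢
    interval_cases s
    simp [Lf_zero]
  | succ T ih =>
    intro s c hs
    rcases Nat.eq_zero_or_pos s with rfl | hpos
    · rw [Lf_zero]
      have hc : T + 1 ≤ c := by
        by_contra hc
        rw [Nat.choose_eq_zero_of_lt (by omega)] at hs
        omega
      have := Nat.choose_pos (show T + 1 ≤ c + 1 by omega)
      omega
    obtain ⟨ha, h1, h2⟩ := greedy_spec T s (by omega)
    set a := Nat.findGreatest (fun a => Nat.choose a (T + 1) ≤ s) (s + T + 1) with hadef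
    have hac : a < c := by
      by_contra hac
      have := Nat.choose_le_choose (T+1) (show c ≤ a by omega)
      omega
    have hs' : s - Nat.choose a (T+1) < Nat.choose a T := by
      have pas : Nat.choose (a+1) (T+1) = Nat.choose a T + Nat.choose a (T+1) :=
        Nat.choose_succ_succ a T
      omega
    have hih := ih (s - Nat.choose a (T+1)) a hs'
    have hL := Lf_step T s a ha h1 h2
    have pas1 : Nat.choose (a+1) (T+1) = Nat.choose a T + Nat.choose a (T+1) :=
      Nat.choose_succ_succ a T
    have pas2 : Nat.choose (a+1+1) (T+1) = Nat.choose (a+1) T + Nat.choose (a+1) (T+1) :=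
      Nat.choose_succ_succ (a+1) T
    have hmono : Nat.choose (a+1+1) (T+1) ≤ Nat.choose (c+1) (T+1) :=
      Nat.choose_le_choose (T+1) (by omega)
    omega

/-- Bound on the upper shadow. -/
lemma UB_lemma : ∀ T r c : ℕ, r < Nat.choose c T → T < c → Uf T r < Nat.choose (c-1) T := by
  intro T
  induction T with
  | zero =>
    intro r c hr hc
    rw [Nat.choose_zero_right] at hr ⊢
    interval_cases r
    simp [Uf_zero]
  | succ T ih =>
    intro r c hr hc
    have hpos : 0 < Nat.choose (c-1) (T+1) := Nat.choose_pos (by omega)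
    rcases Nat.eq_zero_or_pos r with rfl | hrpos
    · rw [Uf_zero]; exact hpos
    obtain ⟨ha, h1, h2⟩ := greedy_spec T r (by omega)
    set a := Nat.findGreatest (fun a => Nat.choose a (T + 1) ≤ r) (r + T + 1) with hadef
    have hac : a < c := by
      by_contra hac
      have := Nat.choose_le_choose (T+1) (show c ≤ a by omega)
      omega
    have hU := Uf_step T r a ha h1 h2
    have pas : Nat.choose (a+1) (T+1) = Nat.choose a T + Nat.choose a (T+1) :=
      Nat.choose_succ_succ a T
    have hr' : r - Nat.choose a (T+1) < Nat.choose a T := by omega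
    rcases Nat.eq_or_lt_of_le ha with haT | haT
    · -- a = T + 1 : remainder small, upper shadow vanishes
      have he1 : Nat.choose a T = T + 1 := by
        rw [← haT, Nat.choose_succ_self_right]
      have hz := Z_lemma T (r - Nat.choose a (T+1)) (by omega)
      have he2 : Nat.choose (a-1) (T+1) = 0 := by
        have h' : a - 1 = T := by omega
        rw [h', Nat.choose_eq_zero_of_lt (by omega)]
      rw [hU, hz.1, he2]
      omega
    · have hih := ih (r - Nat.choose a (T+1)) a hr' (by omega)
      rw [hU]
      have pas2 : Nat.choose (a-1+1) (T+1) = Nat.choose (a-1) T + Nat.choose (a-1) (T+1) :=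
        Nat.choose_succ_succ (a-1) T
      have haa : a - 1 + 1 = a := by omega
      rw [haa] at pas2
      have hmono : Nat.choose a (T+1) ≤ Nat.choose (c-1) (T+1) :=
        Nat.choose_le_choose (T+1) (by omega)
      omega

/-- Main identity: `∂^(N) + ∂_(∂^(N)) + δ(N) = N`. -/
lemma A_lemma : ∀ T N : ℕ, (T = 0 → N = 0) →
    Uf T N + Lf T (Uf T N) + Df T N = N := by
  intro T
  induction T with
  | zero => intro N hN; rw [hN rfl]; simp [Uf_zero, Lf_zero, Df_zero]
  | succ T ih =>
    intro N _
    rcases Nat.eq_zero_or_pos N with rfl | hpos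
    · simp [Uf_zero, Lf_zero, Df_zero]
    obtain ⟨ha, h1, h2⟩ := greedy_spec T N (by omega)
    set a := Nat.findGreatest (fun a => Nat.choose a (T + 1) ≤ N) (N + T + 1) with hadef
    have pas : Nat.choose (a+1) (T+1) = Nat.choose a T + Nat.choose a (T+1) :=
      Nat.choose_succ_succ a T
    have hr' : N - Nat.choose a (T+1) < Nat.choose a T := by omega
    have hU := Uf_step T N a ha h1 h2
    have hD := Df_step T N a ha h1 h2
    rcases Nat.eq_or_lt_of_le ha with haT | haT
    · -- trailing-ones case
      have he1 : Nat.choose a (T+1) = 1 := by rw [← haT, Nat.choose_self]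
      have he2 : Nat.choose a T = T + 1 := by rw [← haT, Nat.choose_succ_self_right]
      have hz := Z_lemma T (N - Nat.choose a (T+1)) (by omega)
      have he3 : Nat.choose (a-1) (T+1) = 0 := by
        have h' : a - 1 = T := by omega
        rw [h', Nat.choose_eq_zero_of_lt (by omega)]
      have hU0 : Uf (T+1) N = 0 := by rw [hU, hz.1, he3]
      rw [hU0, Lf_zero, hD, hz.2, if_pos haT.symm]
      omega
    · -- main case a ≥ T + 2
      have hUB := UB_lemma T (N - Nat.choose a (T+1)) a hr' (by omega)
      have pas2 : Nat.choose (a-1+1) (T+1) = Nat.choose (a-1) T + Nat.choose (a-1) (T+1) :=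
        Nat.choose_succ_succ (a-1) T
      have haa : a - 1 + 1 = a := by omega
      rw [haa] at pas2
      have hL := Lf_step T (Uf (T+1) N) (a-1) (by omega)
        (by rw [hU]; omega)
        (by rw [haa, pas2, hU]; omega)
      have hsub : Uf (T+1) N - Nat.choose (a-1) (T+1) = Uf T (N - Nat.choose a (T+1)) := by
        rw [hU]; omega
      rw [hsub] at hL
      have hih := ih (N - Nat.choose a (T+1)) (by
        intro hT0
        subst hT0
        rw [Nat.choose_zero_right] at hr'
        omega)
      have hif : (if a = T + 1 then (1:ℕ) else 0) = 0 := if_neg (by omega)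
      rw [hL, hD, hif, hU]
      omega

/-- Left inverse: `∂^(n + ∂_(n)) = n`. -/
lemma B_lemma : ∀ T s : ℕ, (T = 0 → s = 0) → Uf T (s + Lf T s) = s := by
  intro T
  induction T with
  | zero => intro s hs; rw [hs rfl]; simp [Uf_zero, Lf_zero]
  | succ T ih =>
    intro s _
    rcases Nat.eq_zero_or_pos s with rfl | hpos
    · simp [Uf_zero, Lf_zero]
    obtain ⟨ha, h1, h2⟩ := greedy_spec T s (by omega)
    set a := Nat.findGreatest (fun a => Nat.choose a (T + 1) ≤ s) (s + T + 1) with hadef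
    have pas : Nat.choose (a+1) (T+1) = Nat.choose a T + Nat.choose a (T+1) :=
      Nat.choose_succ_succ a T
    have hs' : s - Nat.choose a (T+1) < Nat.choose a T := by omega
    have hL := Lf_step T s a ha h1 h2
    have hM := M_lemma T (s - Nat.choose a (T+1)) a hs'
    have pas2 : Nat.choose (a+1+1) (T+1) = Nat.choose (a+1) T + Nat.choose (a+1) (T+1) :=
      Nat.choose_succ_succ (a+1) T
    have hU := Uf_step T (s + Lf (T+1) s) (a+1) (by omega)
      (by rw [hL]; omega)
      (by rw [pas2, hL]; omega)
    have hsub : s + Lf (T+1) s - Nat.choose (a+1) (T+1) =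
        (s - Nat.choose a (T+1)) + Lf T (s - Nat.choose a (T+1)) := by
      rw [hL]; omega
    have hih := ih (s - Nat.choose a (T+1)) (by
      intro hT0
      subst hT0
      rw [Nat.choose_zero_right] at hs'
      omega)
    have haa : a + 1 - 1 = a := by omega
    rw [hU, hsub, hih, haa]
    omega

/-- Theorem 1.3(b): `n = ∂^k(n+m)` if and only if `∂_k(n) + δ_k(n+m) = m`. -/
theorem eq_partialUpper_iff_partialLower_add_deltaErr (k n m : ℕ) :
    n = partialUpper k (n + m) ↔ partialLower k n + deltaErr k (n + m) = m := by
  have hUeq : partialUpper k (n + m) = Uf (k+1) (n+m) := rfl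
  have hLeq : ∀ x, partialLower k x = Lf (k+1) x := fun _ => rfl
  have hDeq : deltaErr k (n + m) = Df (k+1) (n+m) := rfl
  have hA := A_lemma (k+1) (n+m) (by omega)
  rw [hUeq, hLeq, hDeq]
  constructor
  · intro h
    rw [← h] at hA
    omega
  · intro h
    have key : Uf (k+1) (n + m) + Lf (k+1) (Uf (k+1) (n+m)) = n + Lf (k+1) n := by omega
    have hB1 := B_lemma (k+1) n (by omega)
    have hB2 := B_lemma (k+1) (Uf (k+1) (n+m)) (by omega)
    rw [← key] at hB1
    exact hB1.symm.trans hB2
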